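/- For t, α ≥ 0 and μ > 0, with W_{α,k}(t) = 2 g'_{α,k}(t) t + g_{α,k}(t) and g_{α,k}(t) = k(μ²+t)^α/(k+(μ²+t)^α), the sequence (W_{α,k}(t))_{k≥1} is nondecreasing in k, and its limit as k → ∞ equals (μ² + t)^{α−1}(2αt + μ² + t); moreover (μ² + t)^α ≤ lim_{k→∞} W_{α,k}(t) ≤ 3(α + 1)(μ² + t)^α. -/

import Mathlib

open Real Filter

/-- The smooth truncation `g_{α,k}(t) = k(μ²+t)^α / (k+(μ²+t)^α)`, indexed by `k ∈ ℕ`. -/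
noncomputable def gTrunc (μ α : ℝ) (k : ℕ) : ℝ → ℝ :=
  fun t => (k : ℝ) * (μ ^ 2 + t) ^ α / ((k : ℝ) + (μ ^ 2 + t) ^ α)

/-- `W_{α,k}(t) = 2 g'_{α,k}(t) t + g_{α,k}(t)`. -/
noncomputable def WTrunc (μ α : ℝ) (k : ℕ) : ℝ → ℝ :=
  fun t => 2 * deriv (gTrunc μ α k) t * t + gTrunc μ α k t

/-- For `t, α ≥ 0` and `μ > 0`, the sequence `k ↦ W_{α,k}(t)` is nondecreasing in
`k ≥ 1`, converges to `(μ²+t)^{α-1}(2αt + μ² + t)` as `k → ∞`, and this limit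
satisfies `(μ²+t)^α ≤ lim ≤ 3(α+1)(μ²+t)^α`. -/
theorem stmt9 (μ α t : ℝ) (hμ : 0 < μ) (hα : 0 ≤ α) (ht : 0 ≤ t) :
    (∀ k : ℕ, 1 ≤ k → WTrunc μ α k t ≤ WTrunc μ α (k + 1) t) ∧
      Tendsto (fun k : ℕ => WTrunc μ α k t) atTop
        (nhds ((μ ^ 2 + t) ^ (α - 1) * (2 * α * t + μ ^ 2 + t))) ∧
      (μ ^ 2 + t) ^ α ≤ (μ ^ 2 + t) ^ (α - 1) * (2 * α * t + μ ^ 2 + t) ∧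
      (μ ^ 2 + t) ^ (α - 1) * (2 * α * t + μ ^ 2 + t) ≤ 3 * (α + 1) * (μ ^ 2 + t) ^ α := by
  set s : ℝ := μ ^ 2 + t with hs_def
  have hs : 0 < s := by positivity
  set c : ℝ := s ^ α with hc_def
  have hc : 0 < c := Real.rpow_pos_of_pos hs α
  have hsa1 : (0:ℝ) ≤ s ^ (α - 1) := (Real.rpow_pos_of_pos hs _).le
  -- derivative of the inner power function
  have h2 : HasDerivAt (fun x : ℝ => (μ ^ 2 + x) ^ α) (α * s ^ (α - 1)) t := by
    have h1 : HasDerivAt (fun x : ℝ => μ ^ 2 + x) 1 t := (hasDerivAt_id t).const_add _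
    have := (Real.hasDerivAt_rpow_const (x := s) (p := α) (Or.inl hs.ne')).comp t h1
    rw [← mul_one (α * s ^ (α - 1))]; exact this
  -- formula for W
  have hW : ∀ k : ℕ, WTrunc μ α k t =
      2 * α * s ^ (α - 1) * t * ((k : ℝ) / ((k : ℝ) + c)) ^ 2 + c * ((k : ℝ) / ((k : ℝ) + c)) := by
    intro k
    have hkc : ((k : ℝ) + c) ≠ 0 := by positivity
    have hg : HasDerivAt (gTrunc μ α k)
        (((k : ℝ) * (α * s ^ (α - 1)) * ((k : ℝ) + c) - (k : ℝ) * c * (α * s ^ (α - 1))) /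
          ((k : ℝ) + c) ^ 2) t := by
      exact (h2.const_mul (k : ℝ)).div (h2.const_add (k : ℝ)) hkc
    have hd := hg.deriv
    simp only [WTrunc, gTrunc, hd]
    rw [← hc_def]
    field_simp
    ring
  have hrmono : ∀ k : ℕ, (k : ℝ) / ((k : ℝ) + c) ≤ ((k : ℝ) + 1) / (((k : ℝ) + 1) + c) := by
    intro k
    rw [div_le_div_iff₀ (by positivity) (by positivity)]
    nlinarith [hc.le, Nat.cast_nonneg (α := ℝ) k]
  have hrnonneg : ∀ k : ℕ, (0:ℝ) ≤ (k : ℝ) / ((k : ℝ) + c) := fun k => by positivity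
  refine ⟨?_, ?_, ?_, ?_⟩
  · intro k _
    rw [hW k, hW (k + 1)]
    push_cast
    have h1 := hrmono k
    have h2 := hrnonneg k
    have hcoef : (0:ℝ) ≤ 2 * α * s ^ (α - 1) * t := by positivity
    gcongr
  · have hr : Tendsto (fun k : ℕ => (k : ℝ) / ((k : ℝ) + c)) atTop (nhds 1) :=
      tendsto_natCast_div_add_atTop c
    have : Tendsto (fun k : ℕ => 2 * α * s ^ (α - 1) * t * ((k : ℝ) / ((k : ℝ) + c)) ^ 2
        + c * ((k : ℝ) / ((k : ℝ) + c))) atTop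
        (nhds (2 * α * s ^ (α - 1) * t * 1 ^ 2 + c * 1)) :=
      ((tendsto_const_nhds.mul (hr.pow 2)).add (tendsto_const_nhds.mul hr))
    have heq : 2 * α * s ^ (α - 1) * t * 1 ^ 2 + c * 1 = s ^ (α - 1) * (2 * α * t + μ ^ 2 + t) := by
      have : c = s ^ (α - 1) * s := by
        rw [hc_def, ← Real.rpow_add_one hs.ne' (α - 1)]
        ring_nf
      rw [this, hs_def]
      ring
    rw [← heq]
    exact this.congr fun k => (hW k).symm
  · have : c = s ^ (α - 1) * s := by
      rw [hc_def, ← Real.rpow_add_one hs.ne' (α - 1)]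
      ring_nf
    have h1 : (0:ℝ) ≤ s ^ (α - 1) * (2 * α * t) := by positivity
    calc (μ ^ 2 + t) ^ α = s ^ (α - 1) * s := this
      _ ≤ s ^ (α - 1) * (2 * α * t) + s ^ (α - 1) * s := le_add_of_nonneg_left h1
      _ = s ^ (α - 1) * (2 * α * t + μ ^ 2 + t) := by rw [hs_def]; ring
  · have hcs : c = s ^ (α - 1) * s := by
      rw [hc_def, ← Real.rpow_add_one hs.ne' (α - 1)]
      ring_nf
    have hts : t ≤ s := by rw [hs_def]; nlinarith [sq_nonneg μ]
    have h1 : s ^ (α - 1) * (2 * α * t) ≤ s ^ (α - 1) * (2 * α * s) := by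
      apply mul_le_mul_of_nonneg_left _ hsa1
      nlinarith
    calc s ^ (α - 1) * (2 * α * t + μ ^ 2 + t)
        = s ^ (α - 1) * (2 * α * t) + s ^ (α - 1) * s := by rw [hs_def]; ring
      _ ≤ s ^ (α - 1) * (2 * α * s) + s ^ (α - 1) * s := by linarith
      _ = (2 * α + 1) * c := by rw [hcs]; ring
      _ ≤ 3 * (α + 1) * c := by nlinarith
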